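/- arXiv:2108.05578 — 3 statements merged into one kernel-verified Lean document; each statement's English description precedes it below -/
import Mathlib

section
/- Let λ ∈ (0,1) with 1/λ a positive integer, let κ ∈ (0,1) be an accuracy parameter, and let ρ be a bounded measurable function on ℝ², vanishing outside the unit square Q, such that the average of ρ over every tile Q' ∈ T_λ is zero. Then there exists a constant C₁ > 0 depending only on κ such that the geometric mixing scale satisfies G(ρ) ≤ C₁ λ. -/
open MeasureTheory Metric Set

noncomputable section

abbrev E2 : Type := EuclideanSpace ℝ (Fin 2)

/-- The open unit square `Q = (-1/2,1/2)²`. -/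
def Qset : Set E2 := {x : E2 | |x 0| < 1 / 2 ∧ |x 1| < 1 / 2}

/-- The tile of the tiling `T_λ` of `Q` with indices `k, h`. -/
def tile (lam : ℝ) (k h : ℕ) : Set E2 :=
  {x : E2 | (-(1:ℝ)/2 + k * lam < x 0 ∧ x 0 < -(1:ℝ)/2 + (k + 1) * lam) ∧
            (-(1:ℝ)/2 + h * lam < x 1 ∧ x 1 < -(1:ℝ)/2 + (h + 1) * lam)}

/-- The geometric mixing scale with accuracy `κ`: the infimum of all `ε > 0` such that for every
`x` the average of `ρ` over `B(x,ε)` is, in absolute value, less than `κ‖ρ‖_∞`. -/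
def geomMixScale (κ : ℝ) (ρ : E2 → ℝ) : ℝ :=
  sInf {ε : ℝ | 0 < ε ∧
    ∀ x : E2, |⨍ y in ball x ε, ρ y| < κ * (eLpNorm ρ ⊤ volume).toReal}

namespace Stmt3Aux

lemma coord_meas (i : Fin 2) : Measurable fun x : E2 => x i :=
  (EuclideanSpace.proj (𝕜 := ℝ) i).continuous.measurable

lemma tile_meas (lam : ℝ) (k h : ℕ) : MeasurableSet (tile lam k h) := by
  have m0 := coord_meas 0
  have m1 := coord_meas 1
  exact ((measurableSet_lt measurable_const m0).inter
      (measurableSet_lt m0 measurable_const)).inter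
    ((measurableSet_lt measurable_const m1).inter (measurableSet_lt m1 measurable_const))

lemma Qset_meas : MeasurableSet Qset :=
  (measurableSet_lt (coord_meas 0).abs measurable_const).inter
    (measurableSet_lt (coord_meas 1).abs measurable_const)

lemma interval_disj {lam : ℝ} (hlam : 0 < lam) {k k' : ℕ} (hkk : k ≠ k') {t : ℝ}
    (h1 : -(1:ℝ)/2 + k*lam < t) (h2 : t < -(1:ℝ)/2 + (k+1)*lam)
    (h3 : -(1:ℝ)/2 + k'*lam < t) (h4 : t < -(1:ℝ)/2 + (k'+1)*lam) : False := by
  rcases lt_or_gt_of_ne hkk with h | h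
  · have hk : (k:ℝ) + 1 ≤ k' := by exact_mod_cast h
    nlinarith
  · have hk : (k':ℝ) + 1 ≤ k := by exact_mod_cast h
    nlinarith

lemma tile_disjoint {lam : ℝ} (hlam : 0 < lam) {k h k' h' : ℕ}
    (hne : (k, h) ≠ (k', h')) : Disjoint (tile lam k h) (tile lam k' h') := by
  rw [Set.disjoint_left]
  rintro y ⟨⟨a1, a2⟩, b1, b2⟩ ⟨⟨c1, c2⟩, d1, d2⟩
  by_cases hk : k = k'
  · subst hk
    have hh : h ≠ h' := fun hhh => hne (by rw [hhh])
    exact interval_disj hlam hh b1 b2 d1 d2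
  · exact interval_disj hlam hk a1 a2 c1 c2

lemma tile_dist {lam : ℝ} (hlam : 0 < lam) {k h : ℕ} {y z : E2}
    (hy : y ∈ tile lam k h) (hz : z ∈ tile lam k h) :
    dist y z ≤ Real.sqrt 2 * lam := by
  obtain ⟨⟨a1, a2⟩, b1, b2⟩ := hy
  obtain ⟨⟨c1, c2⟩, d1, d2⟩ := hz
  have h0 : dist (y 0) (z 0) ^ 2 ≤ lam ^ 2 := by
    rw [Real.dist_eq]
    have : |y 0 - z 0| ≤ lam := by rw [abs_le]; constructor <;> nlinarith
    nlinarith [abs_nonneg (y 0 - z 0)]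
  have h1 : dist (y 1) (z 1) ^ 2 ≤ lam ^ 2 := by
    rw [Real.dist_eq]
    have : |y 1 - z 1| ≤ lam := by rw [abs_le]; constructor <;> nlinarith
    nlinarith [abs_nonneg (y 1 - z 1)]
  rw [EuclideanSpace.dist_eq, Fin.sum_univ_two]
  have hle : dist (y 0) (z 0) ^ 2 + dist (y 1) (z 1) ^ 2 ≤ 2 * lam ^ 2 := by linarith
  calc Real.sqrt (dist (y 0) (z 0) ^ 2 + dist (y 1) (z 1) ^ 2)
      ≤ Real.sqrt (2 * lam ^ 2) := Real.sqrt_le_sqrt hle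
    _ = Real.sqrt 2 * lam := by
        rw [Real.sqrt_mul (by norm_num), Real.sqrt_sq hlam.le]

lemma coord_cover {lam : ℝ} {m : ℕ} (hlam : 0 < lam) (hmlam : (m:ℝ) * lam = 1)
    {a : ℝ} (ha : |a| < 1/2) (hne : ∀ j : ℕ, j ≤ m → a ≠ -(1:ℝ)/2 + j * lam) :
    ∃ k : ℕ, k < m ∧ -(1:ℝ)/2 + k*lam < a ∧ a < -(1:ℝ)/2 + (k+1)*lam := by
  obtain ⟨ha1, ha2⟩ := abs_lt.1 ha
  set b := (a + 1/2) / lam with hb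
  have hb0 : 0 ≤ b := div_nonneg (by linarith) hlam.le
  have hbm : b < m := by
    rw [hb, div_lt_iff₀ hlam]
    nlinarith
  have hfl : (0:ℤ) ≤ ⌊b⌋ := Int.floor_nonneg.2 hb0
  refine ⟨⌊b⌋.toNat, ?_, ?_, ?_⟩
  · have h1 : ((⌊b⌋.toNat : ℕ) : ℝ) ≤ b := by
      rw [show ((⌊b⌋.toNat : ℕ) : ℝ) = ((⌊b⌋ : ℤ) : ℝ) by exact_mod_cast Int.toNat_of_nonneg hfl]
      exact Int.floor_le b
    exact_mod_cast h1.trans_lt hbm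
  · have h1 : ((⌊b⌋.toNat : ℕ) : ℝ) ≤ b := by
      rw [show ((⌊b⌋.toNat : ℕ) : ℝ) = ((⌊b⌋ : ℤ) : ℝ) by exact_mod_cast Int.toNat_of_nonneg hfl]
      exact Int.floor_le b
    have hk : (⌊b⌋.toNat : ℝ) * lam ≤ a + 1/2 := by
      have := mul_le_mul_of_nonneg_right h1 hlam.le
      rwa [hb, div_mul_cancel₀ _ hlam.ne'] at this
    have hkm : ⌊b⌋.toNat ≤ m := by
      have : ((⌊b⌋.toNat : ℕ) : ℝ) < m := h1.trans_lt hbm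
      exact_mod_cast this.le
    rcases lt_or_eq_of_le (by linarith : -(1:ℝ)/2 + ⌊b⌋.toNat * lam ≤ a) with h | h
    · exact h
    · exact absurd h.symm (hne _ hkm)
  · have h2 : b < ((⌊b⌋.toNat : ℕ) : ℝ) + 1 := by
      rw [show ((⌊b⌋.toNat : ℕ) : ℝ) = ((⌊b⌋ : ℤ) : ℝ) by exact_mod_cast Int.toNat_of_nonneg hfl]
      exact Int.lt_floor_add_one b
    have := mul_lt_mul_of_pos_right h2 hlam
    rw [hb, div_mul_cancel₀ _ hlam.ne'] at this
    linarith

lemma slice_null (i : Fin 2) (c : ℝ) : volume {y : E2 | y i = c} = 0 := by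
  have hmp := (EuclideanSpace.volume_preserving_symm_measurableEquiv_toLp (Fin 2)).symm
  have hms : MeasurableSet {y : E2 | y i = c} := coord_meas i (measurableSet_singleton c)
  rw [← hmp.measure_preimage hms.nullMeasurableSet]
  have hsub : (MeasurableEquiv.toLp 2 (Fin 2 → ℝ)).symm.symm ⁻¹' {y : E2 | y i = c}
      ⊆ Set.pi Set.univ (fun j => if j = i then {c} else Set.univ) := by
    intro f hf j _
    by_cases hj : j = i
    · subst hj
      simp only [if_pos rfl, Set.mem_singleton_iff]
      exact hf
    · simp [hj]
  refine measure_mono_null hsub ?_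
  rw [volume_pi_pi]
  exact Finset.prod_eq_zero (Finset.mem_univ i) (by simp)

lemma sqrt_two_lt_two : Real.sqrt 2 < 2 := by
  nlinarith [Real.sq_sqrt (show (0:ℝ) ≤ 2 by norm_num), Real.sqrt_nonneg 2]

end Stmt3Aux

open Stmt3Aux in
/-- If `ρ` is bounded, vanishes outside `Q` and has zero average on every tile
of `T_λ`, then its geometric mixing scale is at most `C₁ λ`, with `C₁` depending only on `κ`. -/
theorem stmt3 (κ : ℝ) (hκ : κ ∈ Set.Ioo (0:ℝ) 1) :
    ∃ C₁ > 0, ∀ (lam : ℝ) (m : ℕ), 0 < lam → lam < 1 → 0 < m → (m : ℝ) * lam = 1 →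
      ∀ ρ : E2 → ℝ, Measurable ρ → (∃ M, ∀ x, |ρ x| ≤ M) →
        (∀ x ∉ Qset, ρ x = 0) →
        (∀ k h : ℕ, k < m → h < m → ∫ x in tile lam k h, ρ x = 0) →
        geomMixScale κ ρ ≤ C₁ * lam := by
  classical
  obtain ⟨hκ0, hκ1⟩ := hκ
  refine ⟨16 / κ, by positivity, ?_⟩
  rintro lam m hlam hlam1 hm hmlam ρ hmeas ⟨M, hM⟩ hsupp htiles
  set N := (eLpNorm ρ ⊤ volume).toReal with hNdef
  by_cases hN0 : N = 0
  · have hempty : {ε : ℝ | 0 < ε ∧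
        ∀ x : E2, |⨍ y in ball x ε, ρ y| < κ * (eLpNorm ρ ⊤ volume).toReal} = ∅ := by
      ext ε
      simp only [Set.mem_setOf_eq, Set.mem_empty_iff_false, iff_false, not_and]
      intro hε h
      have h0 := h 0
      rw [← hNdef, hN0, mul_zero] at h0
      exact absurd h0 (not_lt.2 (abs_nonneg _))
    unfold geomMixScale
    rw [hempty, Real.sInf_empty]
    positivity
  have hN : 0 < N := lt_of_le_of_ne ENNReal.toReal_nonneg (Ne.symm hN0)
  have hbd : ∀ᵐ y : E2, ‖ρ y‖ ≤ M := ae_of_all _ fun y => by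
    simpa [Real.norm_eq_abs] using hM y
  have hNtop : eLpNormEssSup ρ volume ≠ ⊤ :=
    ((eLpNormEssSup_le_of_ae_bound hbd).trans_lt ENNReal.ofReal_lt_top).ne
  have haeN : ∀ᵐ y : E2, ‖ρ y‖ ≤ N := by
    filter_upwards [ae_le_eLpNormEssSup (f := ρ) (μ := volume)] with y hy
    have h1 : ((‖ρ y‖₊ : ENNReal)).toReal ≤ (eLpNormEssSup ρ volume).toReal :=
      ENNReal.toReal_mono hNtop hy
    simpa [hNdef, eLpNorm_exponent_top] using h1
  set ε := 16 / κ * lam with hεdef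
  have hε0 : 0 < ε := by positivity
  have hsq2 : Real.sqrt 2 < 2 := sqrt_two_lt_two
  have hεlam : Real.sqrt 2 * lam < ε := by
    rw [hεdef]
    have h16 : (16:ℝ) ≤ 16 / κ := by
      rw [le_div_iff₀ hκ0]; nlinarith
    have : Real.sqrt 2 < 16 / κ := by linarith
    exact mul_lt_mul_of_pos_right this hlam
  -- integrability helper
  have hInt : ∀ s : Set E2, volume s ≠ ⊤ → IntegrableOn ρ s volume := fun s hs =>
    Measure.integrableOn_of_bounded hs hmeas.aestronglyMeasurable (ae_restrict_of_ae hbd)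
  -- volume of balls
  have hvol : ∀ (z : E2) (r : ℝ), 0 ≤ r →
      volume (ball z r) = ENNReal.ofReal (Real.pi * r ^ 2) := by
    intro z r hr
    rw [EuclideanSpace.volume_ball]
    rw [show Fintype.card (Fin 2) = 2 from Fintype.card_fin 2]
    rw [show ((2:ℕ):ℝ) / 2 + 1 = 2 by norm_num, Real.Gamma_two,
      Real.sq_sqrt Real.pi_pos.le, div_one, ← ENNReal.ofReal_pow hr, ← ENNReal.ofReal_mul
      (by positivity)]
    ring_nf
  have hvolc : ∀ (z : E2) (r : ℝ), 0 ≤ r →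
      volume (closedBall z r) = ENNReal.ofReal (Real.pi * r ^ 2) := by
    intro z r hr
    rw [Measure.addHaar_closedBall_eq_addHaar_ball]
    exact hvol z r hr
  have hmem : ε ∈ {ε : ℝ | 0 < ε ∧
      ∀ x : E2, |⨍ y in ball x ε, ρ y| < κ * (eLpNorm ρ ⊤ volume).toReal} := by
    refine ⟨hε0, fun x => ?_⟩
    rw [← hNdef]
    set d := Real.sqrt 2 * lam with hddef
    have hd0 : 0 < d := by rw [hddef]; positivity
    set B := ball x ε with hB
    have hBmeas : MeasurableSet B := measurableSet_ball
    have hBfin : volume B ≠ ⊤ := measure_ball_lt_top.ne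
    set F : Finset (ℕ × ℕ) := (Finset.range m ×ˢ Finset.range m).filter
        (fun p => tile lam p.1 p.2 ⊆ B) with hF
    set G := ⋃ p ∈ F, tile lam p.1 p.2 with hG
    have hGB : G ⊆ B := Set.iUnion₂_subset fun p hp => (Finset.mem_filter.1 hp).2
    have hGmeas : MeasurableSet G := F.measurableSet_biUnion fun p _ => tile_meas lam p.1 p.2
    have hGzero : ∫ y in G, ρ y = 0 := by
      rw [hG, integral_biUnion_finset F (fun p _ => tile_meas lam p.1 p.2)
        (fun p _ q _ hpq => by
          have : (p.1, p.2) ≠ (q.1, q.2) := by simpa using hpq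
          exact tile_disjoint hlam this)
        (fun p hp => hInt _ (ne_top_of_le_ne_top hBfin
          (measure_mono (Finset.mem_filter.1 hp).2)))]
      refine Finset.sum_eq_zero fun p hp => ?_
      obtain ⟨hpmem, -⟩ := Finset.mem_filter.1 hp
      obtain ⟨h1, h2⟩ := Finset.mem_product.1 hpmem
      exact htiles p.1 p.2 (Finset.mem_range.1 h1) (Finset.mem_range.1 h2)
    have hIntBG : IntegrableOn ρ (B \ G) volume :=
      hInt _ (ne_top_of_le_ne_top hBfin (measure_mono diff_subset))
    have hsplit : ∫ y in B, ρ y = (∫ y in G, ρ y) + ∫ y in B \ G, ρ y := by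
      have h1 := integral_inter_add_diff (s := B) (t := G) (f := ρ) (μ := volume) hGmeas
        (hInt B hBfin)
      rw [Set.inter_eq_self_of_subset_right hGB] at h1
      linarith
    have hsplit2 : ∫ y in B \ G, ρ y = ∫ y in (B \ G) ∩ Qset, ρ y := by
      have h1 := integral_inter_add_diff (f := ρ) (s := B \ G) (μ := volume) Qset_meas hIntBG
      have hz : ∫ y in (B \ G) \ Qset, ρ y = 0 :=
        setIntegral_eq_zero_of_forall_eq_zero fun y hy => hsupp y hy.2
      linarith
    set A := closedBall x (ε + d) \ ball x (ε - d) with hA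
    set L := ⋃ j : ℕ,
      ({y : E2 | y 0 = -(1:ℝ)/2 + j * lam} ∪ {y : E2 | y 1 = -(1:ℝ)/2 + j * lam}) with hL
    have hLnull : volume L = 0 :=
      measure_iUnion_null fun j => measure_union_null (slice_null 0 _) (slice_null 1 _)
    have hBadSub : (B \ G) ∩ Qset ⊆ A ∪ L := by
      rintro y ⟨⟨hyB, hyG⟩, hyQ⟩
      by_cases hyL : y ∈ L
      · exact Or.inr hyL
      left
      have hL0 : ∀ j : ℕ, j ≤ m → y 0 ≠ -(1:ℝ)/2 + j * lam := fun j _ hj =>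
        hyL (Set.mem_iUnion.2 ⟨j, Or.inl hj⟩)
      have hL1 : ∀ j : ℕ, j ≤ m → y 1 ≠ -(1:ℝ)/2 + j * lam := fun j _ hj =>
        hyL (Set.mem_iUnion.2 ⟨j, Or.inr hj⟩)
      obtain ⟨k, hk, hk1, hk2⟩ := coord_cover hlam hmlam hyQ.1 hL0
      obtain ⟨h, hh, hh1, hh2⟩ := coord_cover hlam hmlam hyQ.2 hL1
      have hyt : y ∈ tile lam k h := ⟨⟨hk1, hk2⟩, hh1, hh2⟩
      have hnotsub : ¬ tile lam k h ⊆ B := by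
        intro hsub
        exact hyG (Set.mem_iUnion₂.2 ⟨(k, h), Finset.mem_filter.2
          ⟨Finset.mem_product.2 ⟨Finset.mem_range.2 hk, Finset.mem_range.2 hh⟩, hsub⟩, hyt⟩)
      obtain ⟨z, hzt, hzB⟩ := Set.not_subset.1 hnotsub
      have hdistyz : dist y z ≤ d := tile_dist hlam hyt hzt
      have hzx : ε ≤ dist z x := not_lt.1 fun hc => hzB (mem_ball.2 hc)
      have hyx : dist y x < ε := mem_ball.1 hyB
      constructor
      · exact mem_closedBall.2 (by linarith)
      · intro hyball
        have h1 : dist y x < ε - d := mem_ball.1 hyball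
        have h2 : dist z x ≤ dist z y + dist y x := dist_triangle z y x
        have h3 : dist z y ≤ d := by rw [dist_comm]; exact hdistyz
        linarith
    have hAfin : volume A ≠ ⊤ :=
      ne_top_of_le_ne_top measure_closedBall_lt_top.ne (measure_mono diff_subset)
    have hAvol : (volume A).toReal ≤ Real.pi * 4 * ε * d := by
      have hsub : ball x (ε - d) ⊆ closedBall x (ε + d) :=
        ball_subset_closedBall.trans (closedBall_subset_closedBall (by linarith))
      rw [hA, measure_diff hsub measurableSet_ball.nullMeasurableSet measure_ball_lt_top.ne,
        hvolc x (ε + d) (by linarith), hvol x (ε - d) (by linarith),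
        ← ENNReal.ofReal_sub _ (by positivity),
        ENNReal.toReal_ofReal (by nlinarith [mul_nonneg (mul_nonneg Real.pi_pos.le hε0.le) hd0.le,
          hεlam, hd0])]
      exact le_of_eq (by ring)
    have hsfin : volume ((B \ G) ∩ Qset) ≠ ⊤ :=
      ne_top_of_le_ne_top hBfin (measure_mono fun y hy => hy.1.1)
    have hIntBound : |∫ y in (B \ G) ∩ Qset, ρ y| ≤ N * (volume A).toReal := by
      have h1 : |∫ y in (B \ G) ∩ Qset, ρ y| ≤ ∫ y in (B \ G) ∩ Qset, ‖ρ y‖ := by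
        simpa [Real.norm_eq_abs] using
          norm_integral_le_integral_norm (f := ρ) (μ := volume.restrict ((B \ G) ∩ Qset))
      have h2 : ∫ y in (B \ G) ∩ Qset, ‖ρ y‖ ≤ ∫ _ in (B \ G) ∩ Qset, N :=
        integral_mono_ae (hInt _ hsfin).norm
          (integrableOn_const hsfin) (ae_restrict_of_ae haeN)
      have h3 : ∫ _ in (B \ G) ∩ Qset, N = N * (volume ((B \ G) ∩ Qset)).toReal := by
        rw [setIntegral_const, smul_eq_mul, mul_comm]; rfl
      have h4 : (volume ((B \ G) ∩ Qset)).toReal ≤ (volume A).toReal := by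
        refine ENNReal.toReal_mono hAfin ?_
        calc volume ((B \ G) ∩ Qset) ≤ volume (A ∪ L) := measure_mono hBadSub
          _ ≤ volume A + volume L := measure_union_le _ _
          _ = volume A := by rw [hLnull, add_zero]
      calc |∫ y in (B \ G) ∩ Qset, ρ y| ≤ N * (volume ((B \ G) ∩ Qset)).toReal := by
            rw [← h3]; exact h1.trans h2
        _ ≤ N * (volume A).toReal := mul_le_mul_of_nonneg_left h4 hN.le
    have hIB : |∫ y in B, ρ y| ≤ N * (Real.pi * 4 * ε * d) := by
      rw [hsplit, hGzero, zero_add, hsplit2]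
      exact hIntBound.trans (mul_le_mul_of_nonneg_left hAvol hN.le)
    have hvolB : (volume B).toReal = Real.pi * ε ^ 2 := by
      rw [hB, hvol x ε hε0.le, ENNReal.toReal_ofReal (by positivity)]
    rw [setAverage_eq, smul_eq_mul]
    calc |((volume B).toReal)⁻¹ * ∫ y in B, ρ y|
        = ((volume B).toReal)⁻¹ * |∫ y in B, ρ y| := by
          rw [abs_mul, abs_of_nonneg (inv_nonneg.2 ENNReal.toReal_nonneg)]
      _ ≤ (Real.pi * ε ^ 2)⁻¹ * (N * (Real.pi * 4 * ε * d)) := by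
          rw [hvolB]
          exact mul_le_mul_of_nonneg_left hIB (by positivity)
      _ < κ * N := by
          have heq : (Real.pi * ε ^ 2)⁻¹ * (N * (Real.pi * 4 * ε * d))
              = N * κ * (Real.sqrt 2 / 4) := by
            rw [hεdef, hddef]
            have hπ := Real.pi_pos
            field_simp
            ring
          rw [heq]
          nlinarith [Real.sqrt_nonneg 2, mul_pos hκ0 hN, hsq2]
  have hbdd : BddBelow {ε : ℝ | 0 < ε ∧
      ∀ x : E2, |⨍ y in ball x ε, ρ y| < κ * (eLpNorm ρ ⊤ volume).toReal} :=
    ⟨0, fun t ht => ht.1.le⟩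
  calc geomMixScale κ ρ ≤ ε := csInf_le hbdd hmem
    _ = 16 / κ * lam := hεdef
end
end

section
/- Let Q be a measurable subset of ℝ² of finite Lebesgue measure and let Φ: Q → Q be a bijection such that both Φ and Φ^{-1} are measurable and preserve Lebesgue measure. Let A, B, B̃, E ⊆ Q be measurable sets with B̃ ⊆ B, and let Q₁, …, Q_N be a finite measurable partition of Q such that |Φ(A) ∩ Q_i| ≤ |Q_i|/2 for every i. If |A ∩ B̃| − |(Q \ A) ∩ B| − |E| > 0, then there exists an index i such that both |Φ(A ∩ B̃) ∩ Q_i \ E| > 0 and |Φ((Q \ A) \ B) ∩ Q_i \ E| > 0. -/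
open MeasureTheory Metric Set

noncomputable section

/-- Pigeonhole argument for a measure-preserving bijection `Φ` of a finite
measure set `Q`: if each cell `Qi i` of a partition of `Q` contains at most half of its measure
of `Φ(A)`, and `|A ∩ B̃| − |(Q \ A) ∩ B| − |E| > 0`, then some cell meets both `Φ(A ∩ B̃) \ E`
and `Φ((Q \ A) \ B) \ E` in positive measure. -/
theorem stmt7 (Q : Set E2) (hQmeas : MeasurableSet Q) (hQfin : volume Q < ⊤)
    (Φ : E2 → E2) (hbij : Set.BijOn Φ Q Q)
    (himg : ∀ S, S ⊆ Q → MeasurableSet S →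
      MeasurableSet (Φ '' S) ∧ volume (Φ '' S) = volume S)
    (hpre : ∀ S, S ⊆ Q → MeasurableSet S →
      MeasurableSet (Q ∩ Φ ⁻¹' S) ∧ volume (Q ∩ Φ ⁻¹' S) = volume S)
    (A B Bt E : Set E2) (hAQ : A ⊆ Q) (hBQ : B ⊆ Q) (hEQ : E ⊆ Q)
    (hAm : MeasurableSet A) (hBm : MeasurableSet B) (hBtm : MeasurableSet Bt)
    (hEm : MeasurableSet E) (hBtB : Bt ⊆ B)
    (N : ℕ) (Qi : Fin N → Set E2) (hQim : ∀ i, MeasurableSet (Qi i))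
    (hQidisj : Pairwise (Function.onFun Disjoint Qi)) (hQiunion : (⋃ i, Qi i) = Q)
    (hhalf : ∀ i, volume (Φ '' A ∩ Qi i) ≤ volume (Qi i) / 2)
    (hgap : 0 < (volume (A ∩ Bt)).toReal - (volume ((Q \ A) ∩ B)).toReal
        - (volume E).toReal) :
    ∃ i : Fin N, 0 < volume ((Φ '' (A ∩ Bt) ∩ Qi i) \ E)
        ∧ 0 < volume ((Φ '' ((Q \ A) \ B) ∩ Qi i) \ E) := by
  classical
  by_contra hcon
  set X := Φ '' (A ∩ Bt) with hXdef
  set Y := Φ '' ((Q \ A) \ B) with hYdef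
  set C := Φ '' ((Q \ A) ∩ B) with hCdef
  have hcon' : ∀ i, volume ((X ∩ Qi i) \ E) = 0 ∨ volume ((Y ∩ Qi i) \ E) = 0 := by
    intro i
    by_contra h
    push_neg at h
    exact hcon ⟨i, pos_iff_ne_zero.2 h.1, pos_iff_ne_zero.2 h.2⟩
  have hABtQ : A ∩ Bt ⊆ Q := fun x hx => hAQ hx.1
  have hABtm : MeasurableSet (A ∩ Bt) := hAm.inter hBtm
  have hYsQ : (Q \ A) \ B ⊆ Q := fun x hx => hx.1.1
  have hYsm : MeasurableSet ((Q \ A) \ B) := (hQmeas.diff hAm).diff hBm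
  have hCsQ : (Q \ A) ∩ B ⊆ Q := fun x hx => hx.1.1
  have hCsm : MeasurableSet ((Q \ A) ∩ B) := (hQmeas.diff hAm).inter hBm
  obtain ⟨hXm, hXv⟩ := himg _ hABtQ hABtm
  obtain ⟨hYm, hYv⟩ := himg _ hYsQ hYsm
  obtain ⟨hCm, hCv⟩ := himg _ hCsQ hCsm
  obtain ⟨hAim, hAiv⟩ := himg A hAQ hAm
  have hQisub : ∀ i, Qi i ⊆ Q := fun i => hQiunion ▸ subset_iUnion Qi i
  have hQifin : ∀ i, volume (Qi i) ≠ ⊤ :=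
    fun i => ((measure_mono (hQisub i)).trans_lt hQfin).ne
  have hXQ : X ⊆ Q := hbij.image_eq ▸ image_mono hABtQ
  have hCQ : C ⊆ Q := hbij.image_eq ▸ image_mono hCsQ
  -- decomposition of Q \ Φ '' A
  have hQdecomp : Q = A ∪ (((Q \ A) \ B) ∪ ((Q \ A) ∩ B)) := by
    ext x
    constructor
    · intro hx
      by_cases hA : x ∈ A
      · exact Or.inl hA
      · by_cases hB : x ∈ B
        · exact Or.inr (Or.inr ⟨⟨hx, hA⟩, hB⟩)
        · exact Or.inr (Or.inl ⟨⟨hx, hA⟩, hB⟩)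
    · rintro (h | h | h)
      exacts [hAQ h, h.1.1, h.1.1]
  have hQimg : Q = Φ '' A ∪ (Y ∪ C) := by
    conv_lhs => rw [← hbij.image_eq, hQdecomp]
    rw [image_union, image_union]
  -- key pointwise inequality
  have key : ∀ i, volume (X ∩ Qi i) ≤ volume (E ∩ Qi i) + volume (C ∩ Qi i) := by
    intro i
    rcases hcon' i with h | h
    · have h1 : volume (X ∩ Qi i) ≤ volume ((X ∩ Qi i) ∩ E) + volume ((X ∩ Qi i) \ E) :=
        measure_le_inter_add_diff _ _ _
      rw [h, add_zero] at h1
      refine h1.trans (le_trans (measure_mono ?_) le_self_add)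
      exact fun x hx => ⟨hx.2, hx.1.2⟩
    · have h1 : volume (X ∩ Qi i) ≤ volume (Φ '' A ∩ Qi i) :=
        measure_mono (inter_subset_inter_left _
          (image_mono inter_subset_left))
      have h2 := hhalf i
      have h3 : volume (Φ '' A ∩ Qi i) + volume (Qi i \ Φ '' A) = volume (Qi i) := by
        rw [inter_comm]
        exact measure_inter_add_diff (Qi i) hAim
      have h4 : volume (Qi i) / 2 ≤ volume (Qi i \ Φ '' A) := by
        have : volume (Qi i) - volume (Qi i) / 2 ≤ volume (Qi i \ Φ '' A) := by
          rw [tsub_le_iff_left]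
          calc volume (Qi i) = volume (Φ '' A ∩ Qi i) + volume (Qi i \ Φ '' A) := h3.symm
            _ ≤ volume (Qi i) / 2 + volume (Qi i \ Φ '' A) := add_le_add_left h2 _
        rwa [ENNReal.sub_half (hQifin i)] at this
      have h5 : Qi i \ Φ '' A ⊆ (Y ∪ C) ∩ Qi i := by
        intro x hx
        have hxQ : x ∈ Q := hQisub i hx.1
        rw [hQimg] at hxQ
        rcases hxQ with hxA | hxYC
        · exact absurd hxA hx.2
        · exact ⟨hxYC, hx.1⟩
      have h6 : volume ((Y ∪ C) ∩ Qi i) ≤ volume (Y ∩ Qi i) + volume (C ∩ Qi i) := by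
        rw [union_inter_distrib_right]
        exact measure_union_le _ _
      have h7 : volume (Y ∩ Qi i) ≤ volume (E ∩ Qi i) := by
        have := measure_le_inter_add_diff volume (Y ∩ Qi i) E
        rw [h, add_zero] at this
        exact this.trans (measure_mono fun x hx => ⟨hx.2, hx.1.2⟩)
      calc volume (X ∩ Qi i) ≤ volume (Qi i) / 2 := h1.trans h2
        _ ≤ volume (Qi i \ Φ '' A) := h4
        _ ≤ volume ((Y ∪ C) ∩ Qi i) := measure_mono h5
        _ ≤ volume (Y ∩ Qi i) + volume (C ∩ Qi i) := h6
        _ ≤ volume (E ∩ Qi i) + volume (C ∩ Qi i) := add_le_add_left h7 _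
  -- sum over the partition
  have hsum : ∀ (S : Set E2), S ⊆ Q → MeasurableSet S →
      volume S = ∑ i, volume (S ∩ Qi i) := by
    intro S hSQ hSm
    have hS : S = ⋃ i, S ∩ Qi i := by
      rw [← inter_iUnion, hQiunion, inter_eq_left.2 hSQ]
    have hdisj : Pairwise (Function.onFun Disjoint fun i => S ∩ Qi i) :=
      fun i j hij => (hQidisj hij).mono inter_subset_right inter_subset_right
    calc volume S = volume (⋃ i, S ∩ Qi i) := by rw [← hS]
      _ = ∑' i, volume (S ∩ Qi i) := measure_iUnion hdisj (fun i => hSm.inter (hQim i))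
      _ = ∑ i, volume (S ∩ Qi i) := tsum_fintype _
  have hfinal : volume X ≤ volume E + volume C := by
    rw [hsum X hXQ hXm, hsum E hEQ hEm, hsum C hCQ hCm, ← Finset.sum_add_distrib]
    exact Finset.sum_le_sum fun i _ => key i
  rw [hXv, hCv] at hfinal
  have hEfin : volume E ≠ ⊤ := ((measure_mono hEQ).trans_lt hQfin).ne
  have hCfin : volume ((Q \ A) ∩ B) ≠ ⊤ := ((measure_mono hCsQ).trans_lt hQfin).ne
  have := ENNReal.toReal_mono (by
    exact ENNReal.add_ne_top.2 ⟨hEfin, hCfin⟩) hfinal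
  rw [ENNReal.toReal_add hEfin hCfin] at this
  linarith
end
end

section
/- Let β ∈ (0,1) and let C, C', γ₁, γ₂, a₁, a₂ be positive real numbers. Let (T_n)_{n∈ℕ} be a strictly increasing sequence of nonnegative real numbers tending to +∞. Then there is no sequence (m_n)_{n∈ℕ} of positive real numbers satisfying simultaneously: (i) γ₁ exp(−a₁ T_n) ≤ m_n ≤ γ₂ exp(−a₂ T_n) for all n ∈ ℕ, and (ii) m_n ≤ C' exp( C β^n (T_{n+k} − T_n) ) · m_{n+k} for all n, k ∈ ℕ. -/
open Filter

/-- No sequence of positive reals can simultaneously be squeezed between two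
exponentials `γ₁ exp(−a₁ T_n) ≤ m_n ≤ γ₂ exp(−a₂ T_n)` along a strictly increasing sequence of
nonnegative times `T_n → ∞` and satisfy the recursive bound
`m_n ≤ C' exp(C β^n (T_{n+k} − T_n)) m_{n+k}` with `β ∈ (0,1)`. -/
theorem stmt11 (β C C' γ₁ γ₂ a₁ a₂ : ℝ) (hβ : β ∈ Set.Ioo (0:ℝ) 1)
    (hC : 0 < C) (hC' : 0 < C') (hγ₁ : 0 < γ₁) (hγ₂ : 0 < γ₂)
    (ha₁ : 0 < a₁) (ha₂ : 0 < a₂)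
    (T : ℕ → ℝ) (hT0 : ∀ n, 0 ≤ T n) (hTmono : StrictMono T)
    (hTtop : Tendsto T atTop atTop) :
    ¬ ∃ m : ℕ → ℝ, (∀ n, 0 < m n) ∧
      (∀ n, γ₁ * Real.exp (-a₁ * T n) ≤ m n ∧ m n ≤ γ₂ * Real.exp (-a₂ * T n)) ∧
      (∀ n k : ℕ, m n ≤ C' * Real.exp (C * β ^ n * (T (n + k) - T n)) * m (n + k)) := by
  rintro ⟨m, hmpos, hsq, hrec⟩
  obtain ⟨hβ0, hβ1⟩ := hβ
  -- choose n with C * β^n < a₂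
  have hpow : Tendsto (fun n : ℕ => C * β ^ n) atTop (nhds 0) := by
    simpa using (tendsto_pow_atTop_nhds_zero_of_lt_one hβ0.le hβ1).const_mul C
  obtain ⟨n, hn⟩ := (hpow.eventually (eventually_lt_nhds ha₂)).exists
  set ε := a₂ - C * β ^ n with hε
  have hεpos : 0 < ε := by simp [hε]; linarith
  set K := C' * γ₂ * Real.exp (-(C * β ^ n) * T n) with hK
  have hKpos : 0 < K := by positivity
  have key : ∀ k, m n ≤ K * Real.exp (-ε * T (n + k)) := by
    intro k
    have h1 := hrec n k
    have h2 := (hsq (n + k)).2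
    have h3 : C' * Real.exp (C * β ^ n * (T (n + k) - T n)) * m (n + k)
        ≤ C' * Real.exp (C * β ^ n * (T (n + k) - T n)) * (γ₂ * Real.exp (-a₂ * T (n + k))) := by
      apply mul_le_mul_of_nonneg_left h2 (by positivity)
    have h4 : C' * Real.exp (C * β ^ n * (T (n + k) - T n)) * (γ₂ * Real.exp (-a₂ * T (n + k)))
        = K * Real.exp (-ε * T (n + k)) := by
      rw [hK, hε, show C' * Real.exp (C * β ^ n * (T (n + k) - T n)) *
          (γ₂ * Real.exp (-a₂ * T (n + k))) = C' * γ₂ *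
          (Real.exp (C * β ^ n * (T (n + k) - T n)) * Real.exp (-a₂ * T (n + k))) from by ring,
        ← Real.exp_add, mul_assoc (C' * γ₂), ← Real.exp_add]
      congr 1
      ring
    linarith
  -- choose k with T (n + k) large
  have hmn := hmpos n
  obtain ⟨N, hN⟩ := (hTtop.eventually
    (eventually_gt_atTop ((Real.log (K / m n)) / ε))).exists
  have hTN : Real.log (K / m n) / ε < T (n + N) :=
    lt_of_lt_of_le hN (hTmono.monotone (Nat.le_add_left N n))
  have hlt : K * Real.exp (-ε * T (n + N)) < m n := by
    have h5 : Real.log (K / m n) < ε * T (n + N) := by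
      rw [div_lt_iff₀ hεpos] at hTN; linarith [hTN]
    have h6 : K / m n < Real.exp (ε * T (n + N)) :=
      (Real.log_lt_iff_lt_exp (by positivity)).mp h5
    rw [div_lt_iff₀ hmn] at h6
    have h7 : Real.exp (-ε * T (n + N)) = (Real.exp (ε * T (n + N)))⁻¹ := by
      rw [← Real.exp_neg]; ring_nf
    rw [h7]
    rw [mul_inv_lt_iff₀' (Real.exp_pos _)]
    linarith
  linarith [key N]
end
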